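/- Along any extremal (x(·),p(·),u(·)) on [0,t_f], the switching function has finitely many zeros: the set {t ∈ [0,t_f] : Φ(t) = 0} is finite. -/

import Mathlib

open MeasureTheory Topology Filter

noncomputable section

/-- Lie bracket of vector fields on ℝ³: `[F,G](x) = G'(x)F(x) − F'(x)G(x)`. -/
def lieBracket (F G : (Fin 3 → ℝ) → (Fin 3 → ℝ)) (x : Fin 3 → ℝ) : Fin 3 → ℝ :=
  fderiv ℝ G x (F x) - fderiv ℝ F x (G x)

/-- Drift vector field of the electric vehicle. -/
def F0 (c1 c2 c3 c4 c5 c6 : ℝ) (x : Fin 3 → ℝ) : Fin 3 → ℝ :=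
  ![c1 * x 0 + c2 * x 2, c3 * x 2, c4 + c5 * x 0 + c6 * (x 2) ^ 2]

/-- Control vector field of the electric vehicle. -/
def F1 (c7 : ℝ) (_x : Fin 3 → ℝ) : Fin 3 → ℝ := ![c7, 0, 0]

/-- An extremal of the minimum time problem on `[0, t_f]`: a measurable control
`u` with values in `[-1,1]`, together with an absolutely continuous pair
`(x, p)` (encoded by the integral form of the Hamiltonian ODE) with nonvanishing
adjoint vector, satisfying the maximization condition
`u(t) Φ(t) = |Φ(t)|` a.e., where `Φ(t) = c₇ p₁(t)` is the switching function. -/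
structure IsExtremal (c1 c2 c3 c4 c5 c6 c7 tf : ℝ)
    (x p : ℝ → Fin 3 → ℝ) (u : ℝ → ℝ) : Prop where
  measurable_u : Measurable u
  u_mem : ∀ᵐ t ∂(volume.restrict (Set.Icc (0:ℝ) tf)), u t ∈ Set.Icc (-1:ℝ) 1
  p_ne : ∀ t ∈ Set.Icc (0:ℝ) tf, p t ≠ 0
  cont_x : ContinuousOn x (Set.Icc (0:ℝ) tf)
  cont_p : ContinuousOn p (Set.Icc (0:ℝ) tf)
  ode_x1 : ∀ t ∈ Set.Icc (0:ℝ) tf,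
    x t 0 = x 0 0 + ∫ s in (0:ℝ)..t, (c1 * x s 0 + c2 * x s 2 + u s * c7)
  ode_x2 : ∀ t ∈ Set.Icc (0:ℝ) tf,
    x t 1 = x 0 1 + ∫ s in (0:ℝ)..t, (c3 * x s 2)
  ode_x3 : ∀ t ∈ Set.Icc (0:ℝ) tf,
    x t 2 = x 0 2 + ∫ s in (0:ℝ)..t, (c4 + c5 * x s 0 + c6 * (x s 2) ^ 2)
  ode_p1 : ∀ t ∈ Set.Icc (0:ℝ) tf,
    p t 0 = p 0 0 + ∫ s in (0:ℝ)..t, (-(c1 * p s 0 + c5 * p s 2))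
  ode_p2 : ∀ t ∈ Set.Icc (0:ℝ) tf, p t 1 = p 0 1
  ode_p3 : ∀ t ∈ Set.Icc (0:ℝ) tf,
    p t 2 = p 0 2 + ∫ s in (0:ℝ)..t, (-(c2 * p s 0 + c3 * p s 1 + 2 * c6 * x s 2 * p s 2))
  maximization : ∀ᵐ t ∂(volume.restrict (Set.Icc (0:ℝ) tf)),
    u t * (c7 * p t 0) = |c7 * p t 0|

/-- Along any extremal the switching function `Φ(t) = c₇ p₁(t)` has finitely
many zeros in `[0, t_f]`. -/
theorem stmt6 (c1 c2 c3 c4 c5 c6 c7 tf : ℝ)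
    (h1 : c1 < 0) (h2 : c2 < 0) (h3 : 0 < c3) (h4 : c4 < 0)
    (h5 : 0 < c5) (h6 : c6 < 0) (h7 : 0 < c7)
    (x p : ℝ → Fin 3 → ℝ) (u : ℝ → ℝ)
    (hext : IsExtremal c1 c2 c3 c4 c5 c6 c7 tf x p u) :
    {t ∈ Set.Icc (0:ℝ) tf | c7 * p t 0 = 0}.Finite := by
  classical
  set K : Set ℝ := Set.Icc (0:ℝ) tf with hK
  set S : Set ℝ := {t ∈ K | c7 * p t 0 = 0} with hSdef
  by_contra hfin
  replace hfin : S.Infinite := hfin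
  have hSK : S ⊆ K := fun t ht => ht.1
  obtain ⟨t₀, ht₀K, hacc⟩ := hfin.exists_accPt_of_subset_isCompact isCompact_Icc hSK
  -- points of S have p t 0 = 0
  have hSzero : ∀ t ∈ S, p t 0 = 0 := by
    intro t ht
    have := ht.2
    have hc7 : c7 ≠ 0 := ne_of_gt h7
    exact (mul_eq_zero.1 this).resolve_left hc7
  -- continuity of components
  have cP1 : ContinuousOn (fun t => p t 0) K := (continuous_apply (0 : Fin 3)).comp_continuousOn hext.cont_p
  have cP2 : ContinuousOn (fun t => p t 1) K := (continuous_apply (1 : Fin 3)).comp_continuousOn hext.cont_p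
  have cP3 : ContinuousOn (fun t => p t 2) K := (continuous_apply (2 : Fin 3)).comp_continuousOn hext.cont_p
  have cX3 : ContinuousOn (fun t => x t 2) K := (continuous_apply (2 : Fin 3)).comp_continuousOn hext.cont_x
  -- integrands
  have hf1c : ContinuousOn (fun s => -(c1 * p s 0 + c5 * p s 2)) K :=
    ((continuousOn_const.mul cP1).add (continuousOn_const.mul cP3)).neg
  have hf3c : ContinuousOn (fun s => -(c2 * p s 0 + c3 * p s 1 + 2 * c6 * x s 2 * p s 2)) K :=
    (((continuousOn_const.mul cP1).add (continuousOn_const.mul cP2)).add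
      ((continuousOn_const.mul cX3).mul cP3)).neg
  -- derivative of p · 0 within K
  have hd1 : ∀ t ∈ K, HasDerivWithinAt (fun s => p s 0) (-(c1 * p t 0 + c5 * p t 2)) K t := by
    intro t ht
    haveI : Fact (t ∈ Set.Icc (0:ℝ) tf) := ⟨ht⟩
    have hsub : Set.uIcc (0:ℝ) t ⊆ K := by
      rw [Set.uIcc_of_le ht.1]; exact Set.Icc_subset_Icc le_rfl ht.2
    have hInt : IntervalIntegrable (fun s => -(c1 * p s 0 + c5 * p s 2)) volume 0 t :=
      (hf1c.mono hsub).intervalIntegrable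
    have hmeas := hf1c.stronglyMeasurableAtFilter_nhdsWithin (μ := volume) measurableSet_Icc t
    have hD := intervalIntegral.integral_hasDerivWithinAt_right (s := Set.Icc (0:ℝ) tf) (t := Set.Icc (0:ℝ) tf) hInt hmeas (hf1c t ht)
    exact (hD.const_add (p 0 0)).congr (fun y hy => hext.ode_p1 y hy) (hext.ode_p1 t ht)
  -- derivative of p · 2 within K
  have hd3 : ∀ t ∈ K, HasDerivWithinAt (fun s => p s 2)
      (-(c2 * p t 0 + c3 * p t 1 + 2 * c6 * x t 2 * p t 2)) K t := by
    intro t ht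
    haveI : Fact (t ∈ Set.Icc (0:ℝ) tf) := ⟨ht⟩
    have hsub : Set.uIcc (0:ℝ) t ⊆ K := by
      rw [Set.uIcc_of_le ht.1]; exact Set.Icc_subset_Icc le_rfl ht.2
    have hInt : IntervalIntegrable (fun s => -(c2 * p s 0 + c3 * p s 1 + 2 * c6 * x s 2 * p s 2))
        volume 0 t := (hf3c.mono hsub).intervalIntegrable
    have hmeas := hf3c.stronglyMeasurableAtFilter_nhdsWithin (μ := volume) measurableSet_Icc t
    have hD := intervalIntegral.integral_hasDerivWithinAt_right (s := Set.Icc (0:ℝ) tf) (t := Set.Icc (0:ℝ) tf) hInt hmeas (hf3c t ht)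
    exact (hD.const_add (p 0 2)).congr (fun y hy => hext.ode_p3 y hy) (hext.ode_p3 t ht)
  -- accumulation filter
  have haccl : (𝓝[S \ {t₀}] t₀).NeBot := by
    rw [← mem_closure_iff_nhdsWithin_neBot, mem_closure_iff_frequently]
    exact (accPt_iff_frequently.1 hacc).mono (fun y hy => ⟨hy.2, hy.1⟩)
  haveI := haccl
  -- p t₀ 0 = 0
  have hP1t₀ : p t₀ 0 = 0 := by
    have h₁ : Filter.Tendsto (fun t => p t 0) (𝓝[S \ {t₀}] t₀) (𝓝 (p t₀ 0)) :=
      (cP1 t₀ ht₀K).mono_left (nhdsWithin_mono _ (fun y hy => hSK hy.1))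
    have h₂ : Filter.Tendsto (fun t => p t 0) (𝓝[S \ {t₀}] t₀) (𝓝 0) := by
      refine Filter.Tendsto.congr' ?_ tendsto_const_nhds
      filter_upwards [self_mem_nhdsWithin] with y hy
      exact (hSzero y hy.1).symm
    exact tendsto_nhds_unique h₁ h₂
  -- the derivative of p · 0 at t₀ vanishes
  have hslope : -(c1 * p t₀ 0 + c5 * p t₀ 2) = 0 := by
    have h₁ : Filter.Tendsto (slope (fun s => p s 0) t₀) (𝓝[S \ {t₀}] t₀)
        (𝓝 (-(c1 * p t₀ 0 + c5 * p t₀ 2))) :=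
      (hasDerivWithinAt_iff_tendsto_slope.1 (hd1 t₀ ht₀K)).mono_left
        (nhdsWithin_mono _ (Set.diff_subset_diff_left hSK))
    have h₂ : Filter.Tendsto (slope (fun s => p s 0) t₀) (𝓝[S \ {t₀}] t₀) (𝓝 0) := by
      refine Filter.Tendsto.congr' ?_ tendsto_const_nhds
      filter_upwards [self_mem_nhdsWithin] with y hy
      simp [slope_def_field, hSzero y hy.1, hP1t₀]
    exact (tendsto_nhds_unique h₁ h₂)
  have hP3t₀ : p t₀ 2 = 0 := by
    have hc5 : c5 ≠ 0 := ne_of_gt h5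
    rw [hP1t₀] at hslope
    have : c5 * p t₀ 2 = 0 := by linarith
    exact (mul_eq_zero.1 this).resolve_left hc5
  have hP2t₀ : p t₀ 1 = p 0 1 := hext.ode_p2 t₀ ht₀K
  have p2ne : p 0 1 ≠ 0 := by
    intro h0
    apply hext.p_ne t₀ ht₀K
    funext i
    fin_cases i
    · simpa using hP1t₀
    · simpa using hP2t₀.trans h0
    · simpa using hP3t₀
  -- Rolle's theorem: between two zeros of p · 0 there is a zero of the derivative
  have rolle : ∀ a b : ℝ, a < b → a ∈ K → b ∈ K → p a 0 = 0 → p b 0 = 0 →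
      ∃ s ∈ Set.Ioo a b, -(c1 * p s 0 + c5 * p s 2) = 0 := by
    intro a b hab haK hbK ha0 hb0
    have hsub : Set.Icc a b ⊆ K := Set.Icc_subset_Icc haK.1 hbK.2
    have hcont : ContinuousOn (fun s => p s 0) (Set.Icc a b) := cP1.mono hsub
    have hderiv : ∀ y ∈ Set.Ioo a b, HasDerivAt (fun s => p s 0)
        (-(c1 * p y 0 + c5 * p y 2)) y := by
      intro y hy
      have hyK : y ∈ K := hsub (Set.Ioo_subset_Icc_self hy)
      exact (hd1 y hyK).hasDerivAt
        (Icc_mem_nhds (lt_of_le_of_lt haK.1 hy.1) (lt_of_lt_of_le hy.2 hbK.2))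
    exact exists_hasDerivAt_eq_zero hab hcont (ha0.trans hb0.symm) hderiv
  -- the zeros of the derivative accumulate at t₀ too
  set W : Set ℝ := {s ∈ K | -(c1 * p s 0 + c5 * p s 2) = 0} \ {t₀} with hWdef
  have hclW : t₀ ∈ closure W := by
    rw [mem_closure_iff]
    intro U hUopen hUmem
    obtain ⟨ε, hε, hball⟩ := Metric.isOpen_iff.1 hUopen t₀ hUmem
    obtain ⟨t1, ⟨ht1b, ht1S⟩, ht1ne⟩ :=
      accPt_iff_nhds.1 hacc (Metric.ball t₀ ε) (Metric.ball_mem_nhds _ hε)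
    have ht1K : t1 ∈ K := hSK ht1S
    have ht1d : |t1 - t₀| < ε := by rwa [Metric.mem_ball, Real.dist_eq] at ht1b
    rcases lt_or_gt_of_ne ht1ne with hlt | hgt
    · obtain ⟨s, hsIoo, hs0⟩ := rolle t1 t₀ hlt ht1K ht₀K (hSzero t1 ht1S) hP1t₀
      have hsK : s ∈ K := ⟨ht1K.1.trans hsIoo.1.le, hsIoo.2.le.trans ht₀K.2⟩
      refine ⟨s, hball ?_, ⟨hsK, hs0⟩, ne_of_lt hsIoo.2⟩
      rw [Metric.mem_ball, Real.dist_eq, abs_lt]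
      rw [abs_lt] at ht1d
      constructor <;> [linarith [hsIoo.1]; linarith [hsIoo.2]]
    · obtain ⟨s, hsIoo, hs0⟩ := rolle t₀ t1 hgt ht₀K ht1K hP1t₀ (hSzero t1 ht1S)
      have hsK : s ∈ K := ⟨ht₀K.1.trans hsIoo.1.le, hsIoo.2.le.trans ht1K.2⟩
      refine ⟨s, hball ?_, ⟨hsK, hs0⟩, ne_of_gt hsIoo.1⟩
      rw [Metric.mem_ball, Real.dist_eq, abs_lt]
      rw [abs_lt] at ht1d
      constructor <;> [linarith [hsIoo.1]; linarith [hsIoo.2]]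
  haveI hWne : (𝓝[W] t₀).NeBot := mem_closure_iff_nhdsWithin_neBot.1 hclW
  -- derivative of the derivative at t₀
  have hdg : HasDerivWithinAt (fun s => -(c1 * p s 0 + c5 * p s 2))
      (-(c1 * (-(c1 * p t₀ 0 + c5 * p t₀ 2)) +
        c5 * (-(c2 * p t₀ 0 + c3 * p t₀ 1 + 2 * c6 * x t₀ 2 * p t₀ 2)))) K t₀ :=
    (((hd1 t₀ ht₀K).const_mul c1).add ((hd3 t₀ ht₀K).const_mul c5)).neg
  have hWsub : W ⊆ K \ {t₀} := fun y hy => ⟨hy.1.1, hy.2⟩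
  have hD0 : -(c1 * (-(c1 * p t₀ 0 + c5 * p t₀ 2)) +
      c5 * (-(c2 * p t₀ 0 + c3 * p t₀ 1 + 2 * c6 * x t₀ 2 * p t₀ 2))) = 0 := by
    have h₁ := (hasDerivWithinAt_iff_tendsto_slope.1 hdg).mono_left (nhdsWithin_mono _ hWsub)
    have h₂ : Filter.Tendsto (slope (fun s => -(c1 * p s 0 + c5 * p s 2)) t₀)
        (𝓝[W] t₀) (𝓝 0) := by
      refine Filter.Tendsto.congr' ?_ tendsto_const_nhds
      filter_upwards [self_mem_nhdsWithin] with y hy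
      have h0y : -(c1 * p y 0 + c5 * p y 2) = 0 := hy.1.2
      simp only [slope_def_field]
      rw [h0y, hslope, sub_zero, zero_div]
    exact tendsto_nhds_unique h₁ h₂
  rw [hP1t₀, hP3t₀, hP2t₀] at hD0
  apply p2ne
  have hc35 : c3 * c5 ≠ 0 := ne_of_gt (mul_pos h3 h5)
  have : c5 * (c3 * p 0 1) = 0 := by linarith
  rcases mul_eq_zero.1 this with h | h
  · exact absurd h (ne_of_gt h5)
  · rcases mul_eq_zero.1 h with h' | h'
    · exact absurd h' (ne_of_gt h3)
    · exact h'
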